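/- If 0 < −α < −β − 1, then each of the vectors (0, 0)ᵀ, −(a, c)ᵀ, and −(c, 0)ᵀ is a periodic point of Φ; in particular, the attractor 𝒜_Φ contains {(0,0)ᵀ, −(a, c)ᵀ, −(c, 0)ᵀ}. -/

import Mathlib

open Matrix Polynomial

noncomputable section

/-- `ℤ²[A]`: the smallest `A`-invariant `ℤ`-module containing `ℤ²`. -/
def intSpan {n : ℕ} (A : Matrix (Fin n) (Fin n) ℚ) : Set (Fin n → ℚ) :=
  {x | ∃ (k : ℕ) (v : ℕ → Fin n → ℤ),
    x = ∑ j ∈ Finset.range (k + 1), (A ^ j).mulVec (fun i => ((v j i : ℚ)))}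

/-- The digit vector `(ν, 0)ᵀ`. -/
def digitVec (ν : ℤ) : Fin 2 → ℚ := ![(ν : ℚ), 0]

lemma intSpan_pad {n : ℕ} (A : Matrix (Fin n) (Fin n) ℚ) (k k' : ℕ) (h : k ≤ k')
    (v : ℕ → Fin n → ℤ) :
    ∑ j ∈ Finset.range (k + 1), (A ^ j).mulVec (fun i => ((v j i : ℚ))) =
    ∑ j ∈ Finset.range (k' + 1), (A ^ j).mulVec
      (fun i => (((if j ≤ k then v j i else 0) : ℤ) : ℚ)) := by
  have h1 : ∑ j ∈ Finset.range (k' + 1), (A ^ j).mulVec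
        (fun i => (((if j ≤ k then v j i else 0) : ℤ) : ℚ)) =
      ∑ j ∈ Finset.range (k + 1), (A ^ j).mulVec
        (fun i => (((if j ≤ k then v j i else 0) : ℤ) : ℚ)) := by
    symm
    refine Finset.sum_subset (Finset.range_subset_range.mpr (by omega)) ?_
    intro j hj hj'
    have hjk : ¬ j ≤ k := fun hle => hj' (Finset.mem_range.mpr (by omega))
    have hz : (fun i => (((if j ≤ k then v j i else 0) : ℤ) : ℚ)) = (0 : Fin n → ℚ) := by
      funext i; simp [hjk]
    rw [hz, Matrix.mulVec_zero]
  rw [h1]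
  refine Finset.sum_congr rfl (fun j hj => ?_)
  have hjk : j ≤ k := by have := Finset.mem_range.mp hj; omega
  simp [hjk]

lemma intSpan_sub {n : ℕ} {A : Matrix (Fin n) (Fin n) ℚ} {x y : Fin n → ℚ}
    (hx : x ∈ intSpan A) (hy : y ∈ intSpan A) : x - y ∈ intSpan A := by
  obtain ⟨k1, v1, rfl⟩ := hx
  obtain ⟨k2, v2, rfl⟩ := hy
  refine ⟨max k1 k2, fun j i =>
    (if j ≤ k1 then v1 j i else 0) - (if j ≤ k2 then v2 j i else 0), ?_⟩
  rw [intSpan_pad A k1 (max k1 k2) (le_max_left _ _) v1,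
      intSpan_pad A k2 (max k1 k2) (le_max_right _ _) v2,
      ← Finset.sum_sub_distrib]
  refine Finset.sum_congr rfl (fun j _ => ?_)
  have hsplit : (fun i => ((((if j ≤ k1 then v1 j i else 0) -
        (if j ≤ k2 then v2 j i else 0) : ℤ)) : ℚ)) =
      (fun i => (((if j ≤ k1 then v1 j i else 0) : ℤ) : ℚ)) -
      (fun i => (((if j ≤ k2 then v2 j i else 0) : ℤ) : ℚ)) := by
    funext i
    push_cast
    simp [Pi.sub_apply]
  rw [hsplit, Matrix.mulVec_sub]

/-- Key divisibility: if `A *ᵥ x = digitVec m` for some `x ∈ ℤ²[A]`, then `b ∣ m`. -/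
lemma keyDvd (α β : ℚ)
    (hirr : Irreducible (X ^ 2 + C α * X + C β : ℚ[X]))
    (c a b : ℤ) (hc : c ≠ 0)
    (ha : (a : ℚ) = (c : ℚ) * α) (hb : (b : ℚ) = (c : ℚ) * β)
    (hprim : Int.gcd c (Int.gcd a b) = 1)
    (A : Matrix (Fin 2) (Fin 2) ℚ) (hA : A = !![0, -β; 1, -α])
    (m : ℤ) (x : Fin 2 → ℚ) (hx : x ∈ intSpan A)
    (hax : A.mulVec x = digitVec m) : b ∣ m := by
  obtain ⟨k, v, rfl⟩ := hx
  set P : ℚ[X] := X ^ 2 + C α * X + C β with hP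
  set e1 : Fin 2 → ℚ := ![1, 0] with he1
  -- Cayley–Hamilton for A
  have hCH : (aeval A) P = 0 := by
    rw [hP]
    simp only [map_add, _root_.map_mul, map_pow, aeval_X, aeval_C]
    ext i j
    fin_cases i <;> fin_cases j <;>
      simp [hA, pow_two, Matrix.mul_apply, Fin.sum_univ_two,
        Matrix.algebraMap_matrix_apply] <;> ring
  -- the annihilator ideal of e1
  let I : Ideal ℚ[X] :=
    { carrier := {g | (aeval A g).mulVec e1 = 0}
      add_mem' := by
        intro g h hg hh
        simp only [Set.mem_setOf_eq, map_add, Matrix.add_mulVec] at *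
        rw [hg, hh, add_zero]
      zero_mem' := by
        simp only [Set.mem_setOf_eq, map_zero, Matrix.zero_mulVec]
      smul_mem' := by
        intro g h hh
        simp only [Set.mem_setOf_eq, smul_eq_mul, _root_.map_mul] at *
        rw [← Matrix.mulVec_mulVec, hh, Matrix.mulVec_zero] }
  have hPI : P ∈ I := by
    show (aeval A P).mulVec e1 = 0
    rw [hCH, Matrix.zero_mulVec]
  have hItop : I ≠ ⊤ := by
    intro htop
    have h1 : (1 : ℚ[X]) ∈ I := by rw [htop]; trivial
    have h2 : ((aeval A) (1 : ℚ[X])).mulVec e1 = 0 := h1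
    rw [_root_.map_one, Matrix.one_mulVec] at h2
    have h3 := congrFun h2 0
    simp [he1] at h3
  have hspan : Ideal.span {P} = I := by
    refine (PrincipalIdealRing.isMaximal_of_irreducible hirr).eq_of_le hItop ?_
    refine Submodule.span_le.mpr ?_
    intro g hg
    rw [Set.mem_singleton_iff] at hg
    rw [hg]
    exact hPI
  have hmemdvd : ∀ g : ℚ[X], (aeval A g).mulVec e1 = 0 → P ∣ g := by
    intro g hg
    have : g ∈ I := hg
    rw [← hspan] at this
    exact (Ideal.mem_span_singleton).mp this
  -- the integer polynomial G
  set G : ℤ[X] := C m - ∑ j ∈ Finset.range (k + 1),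
      (C (v j 0) * X ^ (j + 1) + C (v j 1) * X ^ (j + 2)) with hG
  have hAe1 : A.mulVec e1 = ![0, 1] := by
    funext i
    fin_cases i <;> simp [hA, he1, Matrix.mulVec, dotProduct, Fin.sum_univ_two]
  have hvec : ∀ j : ℕ, (fun i => ((v j i : ℚ))) =
      (v j 0 : ℚ) • e1 + (v j 1 : ℚ) • (![0, 1] : Fin 2 → ℚ) := by
    intro j
    funext i
    fin_cases i <;> simp [he1]
  have hterm : ∀ j : ℕ,
      ((v j 0 : ℚ) • A ^ (j + 1) + (v j 1 : ℚ) • A ^ (j + 2)).mulVec e1 =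
      (A ^ (j + 1)).mulVec (fun i => ((v j i : ℚ))) := by
    intro j
    rw [hvec j, Matrix.mulVec_add, Matrix.add_mulVec,
      Matrix.smul_mulVec, Matrix.smul_mulVec,
      Matrix.mulVec_smul, Matrix.mulVec_smul, ← hAe1,
      Matrix.mulVec_mulVec, ← pow_succ]
  have hAx : A.mulVec (∑ j ∈ Finset.range (k + 1),
      (A ^ j).mulVec (fun i => ((v j i : ℚ)))) =
      ∑ j ∈ Finset.range (k + 1), (A ^ (j + 1)).mulVec (fun i => ((v j i : ℚ))) := by
    rw [show A.mulVec = A.mulVecLin from rfl, map_sum]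
    refine Finset.sum_congr rfl (fun j _ => ?_)
    show A.mulVec ((A ^ j).mulVec _) = _
    rw [Matrix.mulVec_mulVec, ← pow_succ']
  have hdigit : digitVec m = (m : ℚ) • e1 := by
    funext i
    fin_cases i <;> simp [digitVec, he1]
  have hGI : (aeval A (G.map (Int.castRingHom ℚ))).mulVec e1 = 0 := by
    have hmapG : G.map (Int.castRingHom ℚ) =
        C (m : ℚ) - ∑ j ∈ Finset.range (k + 1),
          (C ((v j 0 : ℚ)) * X ^ (j + 1) + C ((v j 1 : ℚ)) * X ^ (j + 2)) := by
      simp [hG, Polynomial.map_sub, Polynomial.map_sum, Polynomial.map_add,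
        Polynomial.map_mul, Polynomial.map_pow, Polynomial.map_C, Polynomial.map_X]
    rw [hmapG]
    have : (aeval A) (C (m : ℚ) - ∑ j ∈ Finset.range (k + 1),
          (C ((v j 0 : ℚ)) * X ^ (j + 1) + C ((v j 1 : ℚ)) * X ^ (j + 2))) =
        (m : ℚ) • 1 - ∑ j ∈ Finset.range (k + 1),
          ((v j 0 : ℚ) • A ^ (j + 1) + (v j 1 : ℚ) • A ^ (j + 2)) := by
      simp only [map_sub, map_sum, map_add, _root_.map_mul, map_pow, aeval_X,
        aeval_C, Algebra.algebraMap_eq_smul_one, smul_one_mul]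
    rw [this, Matrix.sub_mulVec, Matrix.smul_mulVec, Matrix.one_mulVec]
    have hsum : (∑ j ∈ Finset.range (k + 1),
        ((v j 0 : ℚ) • A ^ (j + 1) + (v j 1 : ℚ) • A ^ (j + 2))).mulVec e1 =
        ∑ j ∈ Finset.range (k + 1),
          ((v j 0 : ℚ) • A ^ (j + 1) + (v j 1 : ℚ) • A ^ (j + 2)).mulVec e1 := by
      induction (Finset.range (k + 1)) using Finset.induction with
      | empty => simp
      | insert _ _ hni ih =>
        rw [Finset.sum_insert hni, Finset.sum_insert hni, Matrix.add_mulVec, ih]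
    rw [hsum]
    have : ∑ j ∈ Finset.range (k + 1),
        ((v j 0 : ℚ) • A ^ (j + 1) + (v j 1 : ℚ) • A ^ (j + 2)).mulVec e1 =
        ∑ j ∈ Finset.range (k + 1), (A ^ (j + 1)).mulVec (fun i => ((v j i : ℚ))) :=
      Finset.sum_congr rfl (fun j _ => hterm j)
    rw [this, ← hAx, hax, hdigit, sub_self]
  have hPG : P ∣ G.map (Int.castRingHom ℚ) := hmemdvd _ hGI
  -- the primitive polynomial q
  set q : ℤ[X] := C c * X ^ 2 + C a * X + C b with hq
  have hq0 : q.coeff 0 = b := by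
    simp only [hq, coeff_add, coeff_C_mul, coeff_X_pow, coeff_X, coeff_C]
    norm_num
  have hq1 : q.coeff 1 = a := by
    simp only [hq, coeff_add, coeff_C_mul, coeff_X_pow, coeff_X, coeff_C]
    norm_num
  have hq2 : q.coeff 2 = c := by
    simp only [hq, coeff_add, coeff_C_mul, coeff_X_pow, coeff_X, coeff_C]
    norm_num
  have hqprim : q.IsPrimitive := by
    intro r hr
    rw [Polynomial.C_dvd_iff_dvd_coeff] at hr
    have h0 := hr 0; rw [hq0] at h0
    have h1 := hr 1; rw [hq1] at h1
    have h2 := hr 2; rw [hq2] at h2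
    have hd : r ∣ (1 : ℤ) := by
      have hg1 : r ∣ (Int.gcd a b : ℤ) := Int.dvd_coe_gcd h1 h0
      have hg2 : r ∣ (Int.gcd c (Int.gcd a b) : ℤ) := Int.dvd_coe_gcd h2 hg1
      rwa [hprim] at hg2
    exact isUnit_of_dvd_one hd
  have hqmap : q.map (Int.castRingHom ℚ) = C (c : ℚ) * P := by
    simp only [hq, hP, Polynomial.map_add, Polynomial.map_mul, Polynomial.map_pow,
      Polynomial.map_C, Polynomial.map_X]
    have hca : ((Int.castRingHom ℚ) a) = (c : ℚ) * α := by simpa using ha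
    have hcb : ((Int.castRingHom ℚ) b) = (c : ℚ) * β := by simpa using hb
    have hcc : ((Int.castRingHom ℚ) c) = (c : ℚ) := by simp
    rw [hca, hcb, hcc, Polynomial.C_mul, Polynomial.C_mul]
    ring
  have hGeval : G.eval 0 = m := by
    simp [hG, Polynomial.eval_finset_sum]
  by_cases hG0 : G = 0
  · rw [hG0] at hGeval
    simp at hGeval
    rw [← hGeval]
    exact dvd_zero b
  · have hcont : G.content ≠ 0 := by
      rwa [Ne, Polynomial.content_eq_zero_iff]
    have hfact := Polynomial.eq_C_content_mul_primPart G
    have hPprim : Prime P := hirr.prime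
    have hPdvdPP : P ∣ G.primPart.map (Int.castRingHom ℚ) := by
      have hmap : G.map (Int.castRingHom ℚ) =
          C ((G.content : ℚ)) * G.primPart.map (Int.castRingHom ℚ) := by
        conv_lhs => rw [hfact]
        rw [Polynomial.map_mul, Polynomial.map_C]
        simp
      rw [hmap] at hPG
      have hu : IsUnit (C ((G.content : ℚ)) : ℚ[X]) :=
        Polynomial.isUnit_C.mpr (isUnit_iff_ne_zero.mpr (by exact_mod_cast hcont))
      exact (hu.dvd_mul_left).mp hPG
    have hqdvdPP : q ∣ G.primPart := by
      rw [Polynomial.IsPrimitive.Int.dvd_iff_map_cast_dvd_map_cast q G.primPart hqprim]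
      rw [hqmap]
      have hu : IsUnit (C ((c : ℚ)) : ℚ[X]) :=
        Polynomial.isUnit_C.mpr (isUnit_iff_ne_zero.mpr (by exact_mod_cast hc))
      exact (hu.mul_left_dvd).mpr hPdvdPP
    have hqG : q ∣ G := hqdvdPP.trans (Polynomial.primPart_dvd G)
    obtain ⟨N, hN⟩ := hqG
    refine ⟨N.eval 0, ?_⟩
    rw [← hGeval, hN, Polynomial.eval_mul]
    congr 1
    rw [← hq0]
    simp [Polynomial.coeff_zero_eq_eval_zero]

/-- if `0 < -α < -β - 1`, then `(0,0)ᵀ`, `-(a,c)ᵀ` and `-(c,0)ᵀ`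
are periodic points of `Φ`, i.e. the attractor contains them. -/
theorem stmt6 (α β : ℚ) (hα1 : 0 < -α) (hα2 : -α < -β - 1)
    (hirr : Irreducible (X ^ 2 + C α * X + C β : ℚ[X]))
    (hexp : ∀ z : ℂ, z ^ 2 + (α : ℂ) * z + (β : ℂ) = 0 → 1 < ‖z‖)
    (c a b : ℤ) (hc : 0 < c)
    (ha : (a : ℚ) = (c : ℚ) * α) (hb : (b : ℚ) = (c : ℚ) * β)
    (hprim : Int.gcd c (Int.gcd a b) = 1)
    (A : Matrix (Fin 2) (Fin 2) ℚ) (hA : A = !![0, -β; 1, -α])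
    (Φ : (Fin 2 → ℚ) → Fin 2 → ℚ)
    (hΦmem : ∀ x ∈ intSpan A, Φ x ∈ intSpan A)
    (hΦ : ∀ x ∈ intSpan A, ∃ ν : ℤ, 0 ≤ ν ∧ ν ≤ |b| - 1 ∧
      x = digitVec ν + A.mulVec (Φ x))
     :
    ∀ y ∈ ({0, ![(-a : ℚ), (-c : ℚ)], ![(-c : ℚ), 0]} : Set (Fin 2 → ℚ)),
      y ∈ intSpan A ∧ ∃ r : ℕ, 1 ≤ r ∧ Φ^[r] y = y := by
  have hcq : (0 : ℚ) < (c : ℚ) := by exact_mod_cast hc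
  have hβ : β < -1 := by linarith
  have hb0 : b < 0 := by
    have : (b : ℚ) < 0 := by rw [hb]; nlinarith
    exact_mod_cast this
  have ha0 : a < 0 := by
    have : (a : ℚ) < 0 := by rw [ha]; nlinarith
    exact_mod_cast this
  have hkey : -a < -b - c := by
    have : ((-a : ℤ) : ℚ) < ((-b - c : ℤ) : ℚ) := by
      push_cast
      rw [ha, hb]
      nlinarith
    exact_mod_cast this
  have habs : |b| = -b := abs_of_neg hb0
  have hdet : A.det ≠ 0 := by
    rw [hA, Matrix.det_fin_two_of]
    intro h
    have : β = 0 := by linarith [h]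
    linarith
  have hAinj : ∀ z z' : Fin 2 → ℚ, A.mulVec z = A.mulVec z' → z = z' := by
    intro z z' hzz
    have hu : IsUnit A.det := isUnit_iff_ne_zero.mpr hdet
    have h1 := congrArg (fun w => A⁻¹.mulVec w) hzz
    simp only [Matrix.mulVec_mulVec, Matrix.nonsing_inv_mul A hu, Matrix.one_mulVec] at h1
    exact h1
  -- uniqueness of the digit decomposition
  have uniq : ∀ (ν ν' : ℤ) (z z' : Fin 2 → ℚ), z ∈ intSpan A → z' ∈ intSpan A →
      0 ≤ ν → ν ≤ |b| - 1 → 0 ≤ ν' → ν' ≤ |b| - 1 →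
      digitVec ν + A.mulVec z = digitVec ν' + A.mulVec z' → z = z' := by
    intro ν ν' z z' hz hz' h1 h2 h3 h4 heq
    have hmem : z - z' ∈ intSpan A := intSpan_sub hz hz'
    have hAv : A.mulVec (z - z') = digitVec (ν' - ν) := by
      rw [Matrix.mulVec_sub]
      funext i
      have hi := congrFun heq i
      fin_cases i <;>
        · simp [digitVec] at hi ⊢
          push_cast
          linarith
    have hdvd : b ∣ ν' - ν :=
      keyDvd α β hirr c a b (by omega) ha hb hprim A hA (ν' - ν) (z - z') hmem hAv
    have hdvd' : -b ∣ ν' - ν := (neg_dvd).mpr hdvd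
    have hz0 : ν' - ν = 0 := by
      refine Int.eq_zero_of_abs_lt_dvd hdvd' ?_
      rw [abs_lt]
      omega
    have hνν : ν' = ν := by omega
    apply hAinj
    have := heq
    rw [hνν] at this
    exact (add_left_cancel this)
  -- membership of the three points
  have mem0 : (0 : Fin 2 → ℚ) ∈ intSpan A := by
    refine ⟨0, fun _ _ => 0, ?_⟩
    have : (fun i : Fin 2 => ((0 : ℤ) : ℚ)) = (0 : Fin 2 → ℚ) := by funext i; simp
    simp [this]
    funext i; fin_cases i <;> simp
  have memu : (![(-a : ℚ), (-c : ℚ)] : Fin 2 → ℚ) ∈ intSpan A := by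
    refine ⟨0, fun _ => ![-a, -c], ?_⟩
    simp only [Finset.range_one, Finset.sum_singleton, pow_zero, Matrix.one_mulVec]
    funext i
    fin_cases i <;> simp
  have memw : (![(-c : ℚ), 0] : Fin 2 → ℚ) ∈ intSpan A := by
    refine ⟨0, fun _ => ![-c, 0], ?_⟩
    simp only [Finset.range_one, Finset.sum_singleton, pow_zero, Matrix.one_mulVec]
    funext i
    fin_cases i <;> simp
  -- the explicit digit decompositions
  have hdig0 : (0 : Fin 2 → ℚ) = digitVec 0 + A.mulVec 0 := by
    funext i
    fin_cases i <;> simp [digitVec, Matrix.mulVec_zero]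
  have hdigu : (![(-a : ℚ), (-c : ℚ)] : Fin 2 → ℚ) =
      digitVec (-a) + A.mulVec ![(-c : ℚ), 0] := by
    funext i
    fin_cases i <;>
      simp [digitVec, hA, Matrix.mulVec, dotProduct, Fin.sum_univ_two]
  have hdigw : (![(-c : ℚ), 0] : Fin 2 → ℚ) =
      digitVec (-b - c) + A.mulVec ![(-a : ℚ), (-c : ℚ)] := by
    funext i
    fin_cases i <;>
      · simp [digitVec, hA, Matrix.mulVec, dotProduct, Fin.sum_univ_two]
        push_cast
        nlinarith [ha, hb]
  -- digit range facts
  have hrange0 : (0 : ℤ) ≤ 0 ∧ (0 : ℤ) ≤ |b| - 1 := by constructor <;> omega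
  have hrangea : (0 : ℤ) ≤ -a ∧ -a ≤ |b| - 1 := by constructor <;> omega
  have hrangew : (0 : ℤ) ≤ -b - c ∧ -b - c ≤ |b| - 1 := by constructor <;> omega
  -- compute Φ on the three points
  have hΦ0 : Φ 0 = 0 := by
    obtain ⟨ν, hν1, hν2, heq⟩ := hΦ 0 mem0
    exact uniq ν 0 (Φ 0) 0 (hΦmem 0 mem0) mem0 hν1 hν2 hrange0.1 hrange0.2
      (heq.symm.trans hdig0)
  have hΦu : Φ ![(-a : ℚ), (-c : ℚ)] = ![(-c : ℚ), 0] := by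
    obtain ⟨ν, hν1, hν2, heq⟩ := hΦ _ memu
    exact uniq ν (-a) _ _ (hΦmem _ memu) memw hν1 hν2 hrangea.1 hrangea.2
      (heq.symm.trans hdigu)
  have hΦw : Φ ![(-c : ℚ), 0] = ![(-a : ℚ), (-c : ℚ)] := by
    obtain ⟨ν, hν1, hν2, heq⟩ := hΦ _ memw
    exact uniq ν (-b - c) _ _ (hΦmem _ memw) memu hν1 hν2 hrangew.1 hrangew.2
      (heq.symm.trans hdigw)
  intro y hy
  simp only [Set.mem_insert_iff, Set.mem_singleton_iff] at hy
  rcases hy with rfl | rfl | rfl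
  · exact ⟨mem0, 1, le_refl 1, by simp [hΦ0]⟩
  · refine ⟨memu, 2, by norm_num, ?_⟩
    show Φ (Φ ![(-a : ℚ), (-c : ℚ)]) = ![(-a : ℚ), (-c : ℚ)]
    rw [hΦu, hΦw]
  · refine ⟨memw, 2, by norm_num, ?_⟩
    show Φ (Φ ![(-c : ℚ), 0]) = ![(-c : ℚ), 0]
    rw [hΦw, hΦu]
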